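/- Let d ≥ 2 and C₂ ∈ (0,1). Consider the birth-death chain on ℕ absorbed at 0 with up-probability (1 + C₂ n^{−1/d})/2 from each state n ≥ 2. There exists a constant C₄ > 0 such that for all k ≥ 2, the probability that the chain started at k stays at or above k forever is at least C₄·k^{−1/d}. -/

import Mathlib

lemma aux_factor (x y : ℝ) (hx0 : 0 ≤ x) (hx1 : x ≤ 1) (hyx : y ≤ x) :
    (1 - x) / (1 + x) ≤ Real.exp (-y) := by
  calc (1 - x) / (1 + x) ≤ 1 - x := div_le_self (by linarith) (by linarith)
    _ ≤ Real.exp (-x) := by have := Real.add_one_le_exp (-x); linarith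
    _ ≤ Real.exp (-y) := Real.exp_le_exp.2 (by linarith)

lemma aux_pow4 (x : ℝ) (hx : 0 ≤ x) : (x / 4) ^ 4 ≤ Real.exp x := by
  have h1 : x / 4 ≤ Real.exp (x / 4) := by have := Real.add_one_le_exp (x / 4); linarith
  have h2 : (x / 4) ^ 4 ≤ (Real.exp (x / 4)) ^ 4 := pow_le_pow_left₀ (by positivity) h1 4
  have h3 : (Real.exp (x / 4)) ^ 4 = Real.exp x := by
    rw [← Real.exp_nat_mul]; congr 1; push_cast; ring
  linarith [h2, h3.le, h3.ge]

set_option maxHeartbeats 2000000 in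
theorem stmt_14 (d : ℕ) (hd : 2 ≤ d) (C₂ : ℝ) (hC₂ : C₂ ∈ Set.Ioo (0 : ℝ) 1)
    (stay : ℕ → ℝ)
    (hstay : ∀ k : ℕ, 2 ≤ k → stay k = (∑' ℓ : ℕ, ∏ n ∈ Finset.Ico k (k + ℓ),
      (1 - C₂ * (n : ℝ) ^ (-(1 : ℝ) / d)) / (1 + C₂ * (n : ℝ) ^ (-(1 : ℝ) / d)))⁻¹) :
    ∃ C₄ : ℝ, 0 < C₄ ∧ ∀ k : ℕ, 2 ≤ k → C₄ * (k : ℝ) ^ (-(1 : ℝ) / d) ≤ stay k := by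
  obtain ⟨hC0, hC1⟩ := hC₂
  have hdR : (2 : ℝ) ≤ (d : ℝ) := by exact_mod_cast hd
  have hd0 : (0 : ℝ) < d := by linarith
  have he : -(1 : ℝ) / d ≤ 0 := by
    apply div_nonpos_of_nonpos_of_nonneg <;> linarith
  have hed : -(1 : ℝ) / 2 ≤ -(1 : ℝ) / d := by
    rw [div_le_div_iff₀ (by norm_num) hd0]; nlinarith
  have he1 : (1 : ℝ) / d ≤ 1 := by
    rw [div_le_one hd0]; linarith
  set c : ℝ := C₂ / 2 with hc_def
  have hc : 0 < c := by positivity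
  -- summability of the tail-bound series
  have hsum2 : Summable (fun ℓ : ℕ => (1 : ℝ) / ((ℓ : ℝ) + 1) ^ 2) := by
    have h := (Real.summable_one_div_nat_pow (p := 2)).2 (by norm_num)
    have h2 := (summable_nat_add_iff 1).2 h
    convert h2 using 2 with ℓ
    · rfl
    push_cast; ring_nf
  set B : ℝ := 4 * (256 / c ^ 4) + 1 with hB_def
  have hBpos : 0 < B := by positivity
  have hsumg : Summable (fun ℓ : ℕ => B * ((1 : ℝ) / ((ℓ : ℝ) + 1) ^ 2)) := hsum2.mul_left B
  set A : ℝ := ∑' ℓ : ℕ, B * ((1 : ℝ) / ((ℓ : ℝ) + 1) ^ 2) with hA_def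
  have hA0 : 0 ≤ A := tsum_nonneg (fun ℓ => by positivity)
  set M : ℝ := 6 / C₂ + A with hM_def
  have hM : 0 < M := by positivity
  refine ⟨M⁻¹, by positivity, ?_⟩
  intro k hk
  rw [hstay k hk]
  have hkR : (2 : ℝ) ≤ (k : ℝ) := by exact_mod_cast hk
  set p : ℕ → ℝ := fun ℓ => ∏ n ∈ Finset.Ico k (k + ℓ),
      (1 - C₂ * (n : ℝ) ^ (-(1 : ℝ) / d)) / (1 + C₂ * (n : ℝ) ^ (-(1 : ℝ) / d)) with hp_def
  -- basic facts about x n := C₂ * n ^ (-(1/d))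
  have hrpos : ∀ n : ℕ, 2 ≤ n → 0 < (n : ℝ) ^ (-(1 : ℝ) / d) := by
    intro n hn
    have : (0 : ℝ) < n := by exact_mod_cast Nat.lt_of_lt_of_le (by norm_num) hn
    positivity
  have hrle1 : ∀ n : ℕ, 2 ≤ n → (n : ℝ) ^ (-(1 : ℝ) / d) ≤ 1 := by
    intro n hn
    exact Real.rpow_le_one_of_one_le_of_nonpos (by exact_mod_cast Nat.one_le_of_lt hn) he
  have hx01 : ∀ n : ℕ, 2 ≤ n → 0 < C₂ * (n : ℝ) ^ (-(1 : ℝ) / d) ∧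
      C₂ * (n : ℝ) ^ (-(1 : ℝ) / d) < 1 := by
    intro n hn
    constructor
    · exact mul_pos hC0 (hrpos n hn)
    · calc C₂ * (n : ℝ) ^ (-(1 : ℝ) / d) ≤ C₂ * 1 :=
          mul_le_mul_of_nonneg_left (hrle1 n hn) hC0.le
        _ < 1 := by linarith
  have hfac_nonneg : ∀ n : ℕ, 2 ≤ n →
      0 ≤ (1 - C₂ * (n : ℝ) ^ (-(1 : ℝ) / d)) / (1 + C₂ * (n : ℝ) ^ (-(1 : ℝ) / d)) := by
    intro n hn
    obtain ⟨h1, h2⟩ := hx01 n hn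
    apply div_nonneg <;> linarith
  -- factor bound: if n ≤ t then factor n ≤ exp (-(C₂ * t^(-(1/d))))
  have hfac_le : ∀ (n : ℕ) (t : ℝ), 2 ≤ n → (n : ℝ) ≤ t →
      (1 - C₂ * (n : ℝ) ^ (-(1 : ℝ) / d)) / (1 + C₂ * (n : ℝ) ^ (-(1 : ℝ) / d)) ≤
        Real.exp (-(C₂ * t ^ (-(1 : ℝ) / d))) := by
    intro n t hn hnt
    obtain ⟨h1, h2⟩ := hx01 n hn
    apply aux_factor _ _ h1.le h2.le
    have hn0 : (0 : ℝ) < n := by exact_mod_cast Nat.lt_of_lt_of_le (by norm_num) hn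
    have := Real.rpow_le_rpow_of_nonpos hn0 hnt he
    exact mul_le_mul_of_nonneg_left this hC0.le
  have hpnonneg : ∀ ℓ : ℕ, 0 ≤ p ℓ := by
    intro ℓ
    apply Finset.prod_nonneg
    intro n hn
    exact hfac_nonneg n (le_trans hk (Finset.mem_Ico.1 hn).1)
  -- q : geometric ratio for ℓ ≤ k
  set q : ℝ := Real.exp (-(C₂ * (2 * (k : ℝ)) ^ (-(1 : ℝ) / d))) with hq_def
  have hq0 : 0 ≤ q := (Real.exp_pos _).le
  have hq1 : q < 1 := by
    apply Real.exp_lt_one_iff.2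
    have : (0 : ℝ) < 2 * (k : ℝ) := by linarith
    have := Real.rpow_pos_of_pos this (-(1 : ℝ) / d)
    nlinarith
  have hpq : ∀ ℓ : ℕ, ℓ ≤ k → p ℓ ≤ q ^ ℓ := by
    intro ℓ hℓ
    have h1 : p ℓ ≤ ∏ _n ∈ Finset.Ico k (k + ℓ), q := by
      apply Finset.prod_le_prod
      · intro n hn; exact hfac_nonneg n (le_trans hk (Finset.mem_Ico.1 hn).1)
      · intro n hn
        obtain ⟨hn1, hn2⟩ := Finset.mem_Ico.1 hn
        apply hfac_le n _ (le_trans hk hn1)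
        have : (n : ℝ) < (k : ℝ) + (ℓ : ℝ) := by exact_mod_cast hn2
        have : (ℓ : ℝ) ≤ (k : ℝ) := by exact_mod_cast hℓ
        push_cast at *
        linarith
    simpa [Finset.prod_const, Nat.card_Ico] using h1
  -- subexponential bound for ℓ > k
  have hpg : ∀ ℓ : ℕ, k < ℓ → p ℓ ≤ B * ((1 : ℝ) / ((ℓ : ℝ) + 1) ^ 2) := by
    intro ℓ hℓ
    have hℓ1 : 1 ≤ ℓ := by omega
    have hℓR : (1 : ℝ) ≤ (ℓ : ℝ) := by exact_mod_cast hℓ1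
    set s : ℝ := Real.sqrt ℓ with hs_def
    have hs0 : 0 < s := Real.sqrt_pos.2 (by linarith)
    have hs2 : s ^ 2 = (ℓ : ℝ) := Real.sq_sqrt (by linarith)
    -- step 1: p ℓ ≤ exp(-(C₂ * (2ℓ)^(-(1/d)))) ^ ℓ
    have h1 : p ℓ ≤ (Real.exp (-(C₂ * (2 * (ℓ : ℝ)) ^ (-(1 : ℝ) / d)))) ^ ℓ := by
      have h1' : p ℓ ≤ ∏ _n ∈ Finset.Ico k (k + ℓ),
          Real.exp (-(C₂ * (2 * (ℓ : ℝ)) ^ (-(1 : ℝ) / d))) := by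
        apply Finset.prod_le_prod
        · intro n hn; exact hfac_nonneg n (le_trans hk (Finset.mem_Ico.1 hn).1)
        · intro n hn
          obtain ⟨hn1, hn2⟩ := Finset.mem_Ico.1 hn
          apply hfac_le n _ (le_trans hk hn1)
          have h2 : (n : ℝ) < (k : ℝ) + (ℓ : ℝ) := by exact_mod_cast hn2
          have h3 : (k : ℝ) ≤ (ℓ : ℝ) := by exact_mod_cast le_of_lt hℓ
          linarith
      simpa [Finset.prod_const, Nat.card_Ico] using h1'
    -- step 2: exponent bound
    have h2 : c * s ≤ (ℓ : ℝ) * (C₂ * (2 * (ℓ : ℝ)) ^ (-(1 : ℝ) / d)) := by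
      have hb1 : (1 : ℝ) ≤ 2 * (ℓ : ℝ) := by linarith
      have hstep : (2 * (ℓ : ℝ)) ^ (-(1 : ℝ) / 2) ≤ (2 * (ℓ : ℝ)) ^ (-(1 : ℝ) / d) :=
        Real.rpow_le_rpow_of_exponent_le hb1 hed
      have hval : (2 * (ℓ : ℝ)) ^ (-(1 : ℝ) / 2) = (Real.sqrt (2 * (ℓ : ℝ)))⁻¹ := by
        rw [Real.sqrt_eq_rpow, ← Real.rpow_neg (by linarith)]
        norm_num
      have hsplit : Real.sqrt (2 * (ℓ : ℝ)) = Real.sqrt 2 * s := by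
        rw [hs_def, ← Real.sqrt_mul (by norm_num)]
      have hsqrt2 : Real.sqrt 2 ≤ 2 := by
        nlinarith [Real.sq_sqrt (by norm_num : (0:ℝ) ≤ 2), Real.sqrt_nonneg 2]
      have hsqrt2' : 0 < Real.sqrt 2 := Real.sqrt_pos.2 (by norm_num)
      have hkey : c * s ≤ (ℓ : ℝ) * (C₂ * (Real.sqrt 2 * s)⁻¹) := by
        have hne : Real.sqrt 2 ≠ 0 := ne_of_gt hsqrt2'
        have hne2 : s ≠ 0 := ne_of_gt hs0
        rw [← hs2]
        have h9 : s ^ 2 * (C₂ * (Real.sqrt 2 * s)⁻¹) = C₂ * s / Real.sqrt 2 := by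
          field_simp
        rw [h9, hc_def, le_div_iff₀ hsqrt2']
        nlinarith [mul_nonneg (mul_nonneg hC0.le hs0.le) (sub_nonneg.2 hsqrt2)]
      calc c * s ≤ (ℓ : ℝ) * (C₂ * (Real.sqrt 2 * s)⁻¹) := hkey
        _ = (ℓ : ℝ) * (C₂ * (Real.sqrt (2 * (ℓ : ℝ)))⁻¹) := by rw [hsplit]
        _ = (ℓ : ℝ) * (C₂ * (2 * (ℓ : ℝ)) ^ (-(1 : ℝ) / 2)) := by rw [hval]
        _ ≤ (ℓ : ℝ) * (C₂ * (2 * (ℓ : ℝ)) ^ (-(1 : ℝ) / d)) := by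
            apply mul_le_mul_of_nonneg_left _ (by linarith)
            exact mul_le_mul_of_nonneg_left hstep hC0.le
    -- step 3: combine
    have h3 : (Real.exp (-(C₂ * (2 * (ℓ : ℝ)) ^ (-(1 : ℝ) / d)))) ^ ℓ ≤ Real.exp (-(c * s)) := by
      rw [← Real.exp_nat_mul]
      apply Real.exp_le_exp.2
      calc (ℓ : ℝ) * -(C₂ * (2 * (ℓ : ℝ)) ^ (-(1 : ℝ) / d))
          = -((ℓ : ℝ) * (C₂ * (2 * (ℓ : ℝ)) ^ (-(1 : ℝ) / d))) := by ring
        _ ≤ -(c * s) := neg_le_neg h2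
    -- step 4: polynomial bound on exp(-(c*s))
    have h4 : Real.exp (-(c * s)) ≤ B * ((1 : ℝ) / ((ℓ : ℝ) + 1) ^ 2) := by
      have hcs : 0 < c * s := mul_pos hc hs0
      have hp4 := aux_pow4 (c * s) hcs.le
      have hq4 : 0 < (c * s / 4) ^ 4 := by positivity
      have h5 : Real.exp (-(c * s)) ≤ ((c * s / 4) ^ 4)⁻¹ := by
        rw [Real.exp_neg]
        exact inv_anti₀ hq4 hp4
      have h6 : ((c * s / 4) ^ 4)⁻¹ = 256 / (c ^ 4 * (ℓ : ℝ) ^ 2) := by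
        have : (c * s / 4) ^ 4 = c ^ 4 * (s ^ 2) ^ 2 / 256 := by ring
        rw [this, hs2]
        field_simp
      have h7 : 256 / (c ^ 4 * (ℓ : ℝ) ^ 2) ≤ B * ((1 : ℝ) / ((ℓ : ℝ) + 1) ^ 2) := by
        rw [hB_def]
        rw [div_le_iff₀ (by positivity)]
        have hineq : ((ℓ : ℝ) + 1) ^ 2 ≤ 4 * (ℓ : ℝ) ^ 2 := by nlinarith
        have hc4 : 0 < c ^ 4 := by positivity
        have expand : (4 * (256 / c ^ 4) + 1) * (1 / ((ℓ : ℝ) + 1) ^ 2) * (c ^ 4 * (ℓ : ℝ) ^ 2)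
            = (4 * 256 + c ^ 4) * ((ℓ : ℝ) ^ 2 / ((ℓ : ℝ) + 1) ^ 2) := by
          field_simp
        rw [expand]
        have hfrac : (1 : ℝ) / 4 ≤ (ℓ : ℝ) ^ 2 / ((ℓ : ℝ) + 1) ^ 2 := by
          rw [div_le_div_iff₀ (by norm_num) (by positivity)]
          nlinarith
        nlinarith
      calc Real.exp (-(c * s)) ≤ ((c * s / 4) ^ 4)⁻¹ := h5
        _ = 256 / (c ^ 4 * (ℓ : ℝ) ^ 2) := h6
        _ ≤ B * ((1 : ℝ) / ((ℓ : ℝ) + 1) ^ 2) := h7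
    calc p ℓ ≤ (Real.exp (-(C₂ * (2 * (ℓ : ℝ)) ^ (-(1 : ℝ) / d)))) ^ ℓ := h1
      _ ≤ Real.exp (-(c * s)) := h3
      _ ≤ B * ((1 : ℝ) / ((ℓ : ℝ) + 1) ^ 2) := h4
  -- pointwise bound
  have hple : ∀ ℓ : ℕ, p ℓ ≤ q ^ ℓ + B * ((1 : ℝ) / ((ℓ : ℝ) + 1) ^ 2) := by
    intro ℓ
    by_cases hcase : ℓ ≤ k
    · have := hpq ℓ hcase
      have hg : 0 ≤ B * ((1 : ℝ) / ((ℓ : ℝ) + 1) ^ 2) := by positivity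
      linarith
    · have := hpg ℓ (not_le.1 hcase)
      have hq' : 0 ≤ q ^ ℓ := pow_nonneg hq0 ℓ
      linarith
  have hsumq : Summable (fun ℓ : ℕ => q ^ ℓ) := summable_geometric_of_lt_one hq0 hq1
  have hsumbound : Summable (fun ℓ : ℕ => q ^ ℓ + B * ((1 : ℝ) / ((ℓ : ℝ) + 1) ^ 2)) :=
    hsumq.add hsumg
  have hsump : Summable p := Summable.of_nonneg_of_le hpnonneg hple hsumbound
  -- bound the total sum
  have htsum : ∑' ℓ, p ℓ ≤ (1 - q)⁻¹ + A := by
    calc ∑' ℓ, p ℓ ≤ ∑' ℓ : ℕ, (q ^ ℓ + B * ((1 : ℝ) / ((ℓ : ℝ) + 1) ^ 2)) :=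
        Summable.tsum_le_tsum hple hsump hsumbound
      _ = (∑' ℓ : ℕ, q ^ ℓ) + A := Summable.tsum_add hsumq hsumg
      _ = (1 - q)⁻¹ + A := by rw [tsum_geometric_of_lt_one hq0 hq1]
  -- bound (1-q)⁻¹
  have hgeo : (1 - q)⁻¹ ≤ 6 / C₂ * (k : ℝ) ^ ((1 : ℝ) / d) := by
    set x₀ : ℝ := C₂ * (2 * (k : ℝ)) ^ (-(1 : ℝ) / d) with hx₀_def
    have h2k : (1 : ℝ) ≤ 2 * (k : ℝ) := by linarith
    have hx₀pos : 0 < x₀ := mul_pos hC0 (Real.rpow_pos_of_pos (by linarith) _)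
    have hx₀le : x₀ ≤ 1 := by
      have := Real.rpow_le_one_of_one_le_of_nonpos h2k he
      nlinarith
    have hqx : q = Real.exp (-x₀) := rfl
    have hstep1 : x₀ * Real.exp (-x₀) ≤ 1 - Real.exp (-x₀) := by
      have h := Real.add_one_le_exp x₀
      have hpos := Real.exp_pos (-x₀)
      have := mul_le_mul_of_nonneg_right h hpos.le
      rw [← Real.exp_add] at this
      simp at this
      nlinarith
    have hstep2 : Real.exp (-(1 : ℝ)) ≤ Real.exp (-x₀) := Real.exp_le_exp.2 (by linarith)
    have hstep3 : (1 : ℝ) / 3 ≤ Real.exp (-(1 : ℝ)) := by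
      rw [Real.exp_neg, one_div]
      exact inv_anti₀ (Real.exp_pos 1) (by nlinarith [Real.exp_one_lt_d9])
    have h1q : x₀ / 3 ≤ 1 - q := by
      rw [hqx]
      nlinarith
    have hinv : (1 - q)⁻¹ ≤ (x₀ / 3)⁻¹ := inv_anti₀ (by positivity) h1q
    have hx₀inv : (x₀ / 3)⁻¹ = 3 / C₂ * (2 * (k : ℝ)) ^ ((1 : ℝ) / d) := by
      rw [hx₀_def]
      have : (2 * (k : ℝ)) ^ (-(1 : ℝ) / d) = ((2 * (k : ℝ)) ^ ((1 : ℝ) / d))⁻¹ := by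
        rw [neg_div, Real.rpow_neg (by linarith)]
      rw [this]
      have hr : 0 < (2 * (k : ℝ)) ^ ((1 : ℝ) / d) := Real.rpow_pos_of_pos (by linarith) _
      field_simp
    have hrsplit : (2 * (k : ℝ)) ^ ((1 : ℝ) / d) ≤ 2 * (k : ℝ) ^ ((1 : ℝ) / d) := by
      rw [Real.mul_rpow (by norm_num) (by linarith)]
      have h2d : (2 : ℝ) ^ ((1 : ℝ) / d) ≤ 2 := by
        calc (2 : ℝ) ^ ((1 : ℝ) / d) ≤ (2 : ℝ) ^ (1 : ℝ) :=
            Real.rpow_le_rpow_of_exponent_le (by norm_num) he1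
          _ = 2 := Real.rpow_one 2
      have hkpow : 0 < (k : ℝ) ^ ((1 : ℝ) / d) := Real.rpow_pos_of_pos (by linarith) _
      nlinarith
    calc (1 - q)⁻¹ ≤ (x₀ / 3)⁻¹ := hinv
      _ = 3 / C₂ * (2 * (k : ℝ)) ^ ((1 : ℝ) / d) := hx₀inv
      _ ≤ 3 / C₂ * (2 * (k : ℝ) ^ ((1 : ℝ) / d)) := by
          apply mul_le_mul_of_nonneg_left hrsplit (by positivity)
      _ = 6 / C₂ * (k : ℝ) ^ ((1 : ℝ) / d) := by ring
  have hk1 : (1 : ℝ) ≤ (k : ℝ) ^ ((1 : ℝ) / d) := by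
    apply Real.one_le_rpow (by linarith) (by positivity)
  have hS : ∑' ℓ, p ℓ ≤ M * (k : ℝ) ^ ((1 : ℝ) / d) := by
    have : A ≤ A * (k : ℝ) ^ ((1 : ℝ) / d) := le_mul_of_one_le_right hA0 hk1
    calc ∑' ℓ, p ℓ ≤ (1 - q)⁻¹ + A := htsum
      _ ≤ 6 / C₂ * (k : ℝ) ^ ((1 : ℝ) / d) + A * (k : ℝ) ^ ((1 : ℝ) / d) := by linarith
      _ = M * (k : ℝ) ^ ((1 : ℝ) / d) := by rw [hM_def]; ring
  have hSpos : 0 < ∑' ℓ, p ℓ := by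
    have h0 : p 0 = 1 := by simp [hp_def]
    have := Summable.le_tsum hsump 0 (fun j _ => hpnonneg j)
    linarith [h0 ▸ this]
  -- conclude
  have hkneg : (k : ℝ) ^ (-(1 : ℝ) / d) = ((k : ℝ) ^ ((1 : ℝ) / d))⁻¹ := by
    rw [neg_div, Real.rpow_neg (by linarith)]
  rw [hkneg, ← mul_inv]
  exact inv_anti₀ hSpos hS
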